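/- For g ≥ 1, the level 2 principal congruence subgroup Γ_2(g) of GL(g,ℤ) is normally generated in GL(g,ℤ) by F_1 = I_g − 2S_{1,1}, assuming Γ_2(g) is generated by the matrices E_{i,j}² (i ≠ j) and F_i = I_g − 2S_{i,i} (1 ≤ i ≤ g). -/

import Mathlib

open Matrix

/-- The standard symplectic form matrix `J = [[0, I],[-I, 0]]`. -/
def Jmat (g : ℕ) : Matrix (Fin g ⊕ Fin g) (Fin g ⊕ Fin g) ℤ := fromBlocks 0 1 (-1) 0

/-- `Sp(2g, ℤ)` as a set of integer matrices. -/
def SpSet (g : ℕ) : Set (Matrix (Fin g ⊕ Fin g) (Fin g ⊕ Fin g) ℤ) :=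
  {X | IsUnit X.det ∧ Xᵀ * Jmat g * X = Jmat g}

/-- `urSp(2g)`: symplectic matrices with vanishing lower-left `g × g` block. -/
def urSpSet (g : ℕ) : Set (Matrix (Fin g ⊕ Fin g) (Fin g ⊕ Fin g) ℤ) :=
  {X | X ∈ SpSet g ∧ X.toBlocks₂₁ = 0}

/-- The explicit description: matrices `[[A, B],[0, ᵗA⁻¹]]` with `A` unimodular and
`A⁻¹ * B` symmetric. -/
def urSpSet' (g : ℕ) : Set (Matrix (Fin g ⊕ Fin g) (Fin g ⊕ Fin g) ℤ) :=
  {X | ∃ A B : Matrix (Fin g) (Fin g) ℤ, IsUnit A.det ∧ (A⁻¹ * B).IsSymm ∧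
    X = fromBlocks A B 0 (A⁻¹)ᵀ}

/-- `S_{i,j}`: the symmetric matrix with `1` at `(i,j)` and `(j,i)` and `0` elsewhere
(just a `1` at `(i,i)` when `i = j`). -/
def Smat (g : ℕ) (i j : Fin g) : Matrix (Fin g) (Fin g) ℤ :=
  Matrix.of fun k l => if (k = i ∧ l = j) ∨ (k = j ∧ l = i) then 1 else 0

/-- The elementary matrix `E_{i,j} = I + ℰ_{i,j}`. -/
def Emat (g : ℕ) (i j : Fin g) : Matrix (Fin g) (Fin g) ℤ := 1 + Matrix.single i j 1

/-- `F_i = I - 2 S_{i,i}`. -/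
def Fmat (g : ℕ) (i : Fin g) : Matrix (Fin g) (Fin g) ℤ := 1 - 2 • Matrix.single i i 1

/-- `A_{i,j} = I + S_{i,j} - S_{i,i} - S_{j,j}`, the transposition permutation matrix. -/
def Amat (g : ℕ) (i j : Fin g) : Matrix (Fin g) (Fin g) ℤ :=
  1 + Smat g i j - Smat g i i - Smat g j j

/-- `Y_{i,j} = [[I, S_{i,j}],[0, I]]`. -/
def Ymat (g : ℕ) (i j : Fin g) : Matrix (Fin g ⊕ Fin g) (Fin g ⊕ Fin g) ℤ :=
  fromBlocks 1 (Smat g i j) 0 1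

/-- `X_{i,j} = [[E_{i,j}, 0],[0, ᵗE_{i,j}⁻¹]]` (the paper's `-E_{j,i}` denotes `ᵗE_{i,j}⁻¹`). -/
noncomputable def Xmat (g : ℕ) (i j : Fin g) : Matrix (Fin g ⊕ Fin g) (Fin g ⊕ Fin g) ℤ :=
  fromBlocks (Emat g i j) 0 0 ((Emat g i j)⁻¹)ᵀ

/-- `Z_i = [[F_i, 0],[0, F_i]]`. -/
def Zmat (g : ℕ) (i : Fin g) : Matrix (Fin g ⊕ Fin g) (Fin g ⊕ Fin g) ℤ :=
  fromBlocks (Fmat g i) 0 0 (Fmat g i)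

/-- `S_g = {[[I, B],[0, I]] : B symmetric}`. -/
def SgSet (g : ℕ) : Set (Matrix (Fin g ⊕ Fin g) (Fin g ⊕ Fin g) ℤ) :=
  {X | ∃ B : Matrix (Fin g) (Fin g) ℤ, B.IsSymm ∧ X = fromBlocks 1 B 0 1}

/-- `GL(g, ℤ)` as the set of integer matrices with unit determinant. -/
def GLSet (g : ℕ) : Set (Matrix (Fin g) (Fin g) ℤ) := {X | IsUnit X.det}

/-- The level-`d` principal congruence subgroup `Γ_d(g)` of `GL(g, ℤ)`. -/
def GammaSet (d g : ℕ) : Set (Matrix (Fin g) (Fin g) ℤ) :=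
  {X | IsUnit X.det ∧ X.map (fun a : ℤ => (a : ZMod d)) = 1}

/-- The normal closure of `S` in the group `U` (a subset of invertible matrices),
described as the set of products of `U`-conjugates of elements of `S` and their inverses. -/
def ncl {n : Type*} [Fintype n] [DecidableEq n]
    (U S : Set (Matrix n n ℤ)) : Set (Matrix n n ℤ) :=
  ↑(Submonoid.closure {m | ∃ u ∈ U, ∃ y ∈ S, m = u * y * u⁻¹ ∨ m = u * y⁻¹ * u⁻¹})


section AuxStmt7

variable {g : ℕ}

private lemma Smat_diag' (i : Fin g) : Smat g i i = Matrix.single i i (1:ℤ) := by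
  ext k l; simp [Smat, single]; aesop

private lemma Smat_ne' {i j : Fin g} (h : i ≠ j) :
    Smat g i j = Matrix.single i j (1:ℤ) + Matrix.single j i 1 := by
  ext k l; simp [Smat, single]
  rcases eq_or_ne k i with rfl|hk <;> rcases eq_or_ne l j with rfl|hl <;> simp_all <;> aesop

private lemma Amat_eq' {i j : Fin g} (h : i ≠ j) :
    Amat g i j = 1 + Matrix.single i j (1:ℤ) + Matrix.single j i 1
      - Matrix.single i i 1 - Matrix.single j j 1 := by
  rw [Amat, Smat_ne' h, Smat_diag', Smat_diag']; abel

private lemma Fmat_eq' (i : Fin g) :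
    Fmat g i = 1 - (Matrix.single i i (1:ℤ) + Matrix.single i i 1) := by
  rw [Fmat, two_smul]

private lemma F_mul_F (i : Fin g) : Fmat g i * Fmat g i = 1 := by
  rw [Fmat_eq']
  simp [sub_mul, mul_sub, add_mul, mul_add, -smul_single]
  abel

private lemma E_mul {i j : Fin g} (h : i ≠ j) :
    Emat g i j * (1 - Matrix.single i j (1:ℤ)) = 1 := by
  simp [Emat, mul_sub, add_mul, h, h.symm, -smul_single]

private lemma A_mul_A {i j : Fin g} (h : i ≠ j) : Amat g i j * Amat g i j = 1 := by
  rw [Amat_eq' h]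
  simp [mul_add, add_mul, mul_sub, sub_mul, h, h.symm, -smul_single]

private lemma A_F_A {i j : Fin g} (h : i ≠ j) :
    Amat g i j * Fmat g i * Amat g i j = Fmat g j := by
  rw [Amat_eq' h, Fmat_eq', Fmat_eq']
  simp [mul_add, add_mul, mul_sub, sub_mul, h, h.symm, -smul_single]
  abel

private lemma neZero_of_ne {i j : Fin g} (h : i ≠ j) : NeZero g :=
  ⟨by rintro rfl; exact absurd (Subsingleton.elim i j) h⟩

private lemma E_inv {i j : Fin g} (h : i ≠ j) :
    (Emat g i j)⁻¹ = 1 - Matrix.single i j (1:ℤ) := by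
  have := neZero_of_ne h
  exact inv_eq_right_inv (E_mul h)

private lemma E_det {i j : Fin g} (h : i ≠ j) : IsUnit (Emat g i j).det := by
  have := neZero_of_ne h
  exact IsUnit.of_mul_eq_one _ (by rw [← det_mul, E_mul h, det_one])

private lemma F_inv (i : Fin g) : (Fmat g i)⁻¹ = Fmat g i := by
  have : NeZero g := ⟨by rintro rfl; exact i.elim0⟩
  exact inv_eq_right_inv (F_mul_F i)

private lemma F_det (i : Fin g) : IsUnit (Fmat g i).det :=
  IsUnit.of_mul_eq_one _ (by rw [← det_mul, F_mul_F, det_one])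

private lemma A_inv {i j : Fin g} (h : i ≠ j) : (Amat g i j)⁻¹ = Amat g i j := by
  have := neZero_of_ne h
  exact inv_eq_right_inv (A_mul_A h)

private lemma A_det {i j : Fin g} (h : i ≠ j) : IsUnit (Amat g i j).det :=
  IsUnit.of_mul_eq_one _ (by rw [← det_mul, A_mul_A h, det_one])

private lemma conjF (z i : Fin g) : ∃ u : Matrix (Fin g) (Fin g) ℤ,
    IsUnit u.det ∧ u * Fmat g z * u⁻¹ = Fmat g i := by
  rcases eq_or_ne z i with rfl | h
  · exact ⟨1, by simp, by simp⟩
  · exact ⟨Amat g z i, A_det h, by rw [A_inv h, A_F_A h]⟩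

private lemma key1 {i j : Fin g} (h : i ≠ j) :
    (Emat g i j * Fmat g i * (Emat g i j)⁻¹) * (Fmat g i) = Emat g i j ^ 2 := by
  rw [E_inv h]; simp only [Fmat_eq', pow_two, Emat]
  simp [mul_add, add_mul, mul_sub, sub_mul, h, h.symm, -smul_single]
  abel

private lemma key2 {i j : Fin g} (h : i ≠ j) :
    (Fmat g i) * (Emat g i j * Fmat g i * (Emat g i j)⁻¹) = (Emat g i j ^ 2)⁻¹ := by
  have := neZero_of_ne h
  have h2 : Emat g i j ^ 2 * ((Fmat g i) * (Emat g i j * Fmat g i * (Emat g i j)⁻¹)) = 1 := by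
    rw [E_inv h]; simp only [Fmat_eq', pow_two, Emat]
    simp [mul_add, add_mul, mul_sub, sub_mul, h, h.symm, -smul_single]
    abel
  exact (inv_eq_right_inv h2).symm

private lemma map_F (i : Fin g) : (Fmat g i).map (fun a : ℤ => (a : ZMod 2)) = 1 := by
  ext k l
  simp [Fmat, Matrix.map_apply, Matrix.sub_apply, Matrix.smul_apply, one_apply, single]
  intro _ _; decide

private lemma map_mul' (u v : Matrix (Fin g) (Fin g) ℤ) :
    (u * v).map (fun a : ℤ => (a : ZMod 2)) =
      u.map (fun a : ℤ => (a : ZMod 2)) * v.map (fun a : ℤ => (a : ZMod 2)) :=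
  Matrix.map_mul (f := Int.castRingHom (ZMod 2))

private lemma map_one' : (1 : Matrix (Fin g) (Fin g) ℤ).map (fun a : ℤ => (a : ZMod 2)) = 1 :=
  Matrix.map_one _ (by simp) (by simp)

/-- `GammaSet 2 g` as a submonoid. -/
private def GammaSub (g : ℕ) : Submonoid (Matrix (Fin g) (Fin g) ℤ) where
  carrier := GammaSet 2 g
  one_mem' := ⟨by simp, map_one'⟩
  mul_mem' := fun {a b} ha hb => ⟨by rw [det_mul]; exact ha.1.mul hb.1,
    by rw [map_mul', ha.2, hb.2, one_mul]⟩

private lemma conj_mem_Gamma {u : Matrix (Fin g) (Fin g) ℤ} (hu : IsUnit u.det) (i : Fin g) :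
    u * Fmat g i * u⁻¹ ∈ GammaSet 2 g := by
  constructor
  · refine IsUnit.of_mul_eq_one (u * Fmat g i * u⁻¹).det ?_
    rw [← det_mul]
    have : u * Fmat g i * u⁻¹ * (u * Fmat g i * u⁻¹) = 1 := by
      calc u * Fmat g i * u⁻¹ * (u * Fmat g i * u⁻¹)
          = u * Fmat g i * (u⁻¹ * u) * Fmat g i * u⁻¹ := by noncomm_ring
        _ = u * (Fmat g i * Fmat g i) * u⁻¹ := by rw [nonsing_inv_mul u hu]; noncomm_ring
        _ = 1 := by rw [F_mul_F, mul_one, mul_nonsing_inv u hu]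
    rw [this, det_one]
  · rw [map_mul', map_mul', map_F, mul_one, ← map_mul', mul_nonsing_inv u hu, map_one']

end AuxStmt7

/-- If `Γ_2(g)` is generated by the `E_{i,j}²` (`i ≠ j`) and the `F_i`, then `Γ_2(g)`
is the normal closure of `F_1` in `GL(g, ℤ)`. -/
theorem stmt7 (g : ℕ) (hg : 1 ≤ g)
    (hgen : ∀ X ∈ GammaSet 2 g,
      X ∈ Submonoid.closure
        ({m | ∃ i j : Fin g, i ≠ j ∧ (m = Emat g i j ^ 2 ∨ m = (Emat g i j ^ 2)⁻¹)} ∪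
         {m | ∃ i : Fin g, m = Fmat g i})) :
    GammaSet 2 g = ncl (GLSet g) {Fmat g ⟨0, by omega⟩} := by
  apply Set.Subset.antisymm
  · intro X hX
    refine Submonoid.closure_le.mpr ?_ (hgen X hX)
    rintro m (⟨i, j, hij, (rfl | rfl)⟩ | ⟨i, rfl⟩)
    · obtain ⟨u, hu, hconj⟩ := conjF (⟨0, by omega⟩ : Fin g) i
      rw [← key1 hij]
      refine mul_mem (Submonoid.subset_closure ?_) (Submonoid.subset_closure ?_)
      · refine ⟨Emat g i j * u, (by simpa [GLSet, det_mul] using (E_det hij).mul hu), Fmat g _,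
          Set.mem_singleton _, Or.inl ?_⟩
        rw [Matrix.mul_inv_rev, ← hconj]
        simp [mul_assoc]
      · exact ⟨u, hu, _, Set.mem_singleton _, Or.inl hconj.symm⟩
    · obtain ⟨u, hu, hconj⟩ := conjF (⟨0, by omega⟩ : Fin g) i
      rw [← key2 hij]
      refine mul_mem (Submonoid.subset_closure ?_) (Submonoid.subset_closure ?_)
      · exact ⟨u, hu, _, Set.mem_singleton _, Or.inl hconj.symm⟩
      · refine ⟨Emat g i j * u, (by simpa [GLSet, det_mul] using (E_det hij).mul hu), Fmat g _,
          Set.mem_singleton _, Or.inl ?_⟩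
        rw [Matrix.mul_inv_rev, ← hconj]
        simp [mul_assoc]
    · obtain ⟨u, hu, hconj⟩ := conjF (⟨0, by omega⟩ : Fin g) i
      exact Submonoid.subset_closure ⟨u, hu, _, Set.mem_singleton _, Or.inl hconj.symm⟩
  · intro X hX
    refine (Submonoid.closure_le (S := GammaSub g)).mpr ?_ hX
    rintro m ⟨u, hu, y, hy, (rfl | rfl)⟩
    · rw [Set.mem_singleton_iff] at hy; subst hy
      exact conj_mem_Gamma hu _
    · rw [Set.mem_singleton_iff] at hy; subst hy
      rw [F_inv]
      exact conj_mem_Gamma hu _
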